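/- Given the estimate ‖δ_{t+s,t}(f) − δ_s(f)‖_∞ ≤ m(t) for all valid s, t with m nondecreasing, m(0)=0, and uniform boundedness ‖δ_t(f)‖_∞ ≤ C₀, the Cauchy-type estimate ‖δ_t(f) − δ_h(f)‖_∞ ≤ m(t) + 2C₀ r / t holds, where N = ⌊t/h⌋ and r = t − N h. -/

import Mathlib

open BoundedContinuousFunction

private lemma stmt12_aux {M : Type*} [AddCommGroup M] [Module ℝ M] (a : ℝ) (x y z : M) :
    a • x + (1 - a) • y - z = a • (x - z) + (1 - a) • (y - z) := by
  rw [smul_sub, smul_sub, sub_smul, sub_smul, one_smul, one_smul]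
  abel

private lemma stmt12_nsmul {d : ℕ} (c : ℝ) (f : (Fin d → ℝ) →ᵇ ℝ) : ‖c • f‖ ≤ ‖c‖ * ‖f‖ := by
  exact norm_smul_le c f

/-- Cauchy-type estimate for the difference quotients of the semigroup: given the consistency
estimate `‖δ_{t+s,t} − δ_s‖ ≤ m(t)`, uniform boundedness `‖δ_t‖ ≤ C₀`, and the Markov
decomposition `δ_{a+b} = (a/(a+b))δ_a + (b/(a+b))δ_{a+b,a}`, one has
`‖δ_t − δ_h‖ ≤ m(t) + 2C₀ r / t` with `N = ⌊t/h⌋` and `r = t − Nh`. -/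
theorem stmt_12 {d : ℕ} (Tmax : ℝ) (hT : 0 < Tmax)
    (δ : ℝ → ((Fin d → ℝ) →ᵇ ℝ))       -- δ t = δ_t(f)
    (δ2 : ℝ → ℝ → ((Fin d → ℝ) →ᵇ ℝ))  -- δ2 s t = δ_{t+s,t}(f)
    (C₀ : ℝ) (hC₀ : 0 ≤ C₀)
    (hbound : ∀ t : ℝ, 0 < t → t ≤ Tmax → ‖δ t‖ ≤ C₀)
    (m : ℝ → ℝ) (hm0 : m 0 = 0) (hmnn : ∀ t, 0 ≤ m t)
    (hmono : MonotoneOn m (Set.Icc 0 Tmax)) (hmc : ContinuousOn m (Set.Icc 0 Tmax))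
    (hest : ∀ s t : ℝ, 0 < s → 0 ≤ t → s + t ≤ Tmax → ‖δ2 s t - δ s‖ ≤ m t)
    (hdecomp : ∀ a b : ℝ, 0 < a → 0 < b → a + b ≤ Tmax →
      δ (a + b) = (a / (a + b)) • δ a + (b / (a + b)) • δ2 b a) :
    ∀ t h : ℝ, 0 < h → h ≤ t → t ≤ Tmax →
      ‖δ t - δ h‖ ≤ m t + 2 * C₀ * (t - (⌊t / h⌋₊ : ℝ) * h) / t := by
  intro t h hh hht htT
  have ht : 0 < t := lt_of_lt_of_le hh hht
  set N := ⌊t / h⌋₊ with hNdef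
  have hNt : (N : ℝ) * h ≤ t := by
    have := Nat.floor_le (show (0:ℝ) ≤ t / h from le_of_lt (div_pos ht hh))
    calc (N : ℝ) * h ≤ (t / h) * h := by gcongr
      _ = t := div_mul_cancel₀ _ hh.ne'
  have hN1 : 1 ≤ N := by
    rw [hNdef]
    exact Nat.le_floor (by rw [Nat.cast_one, le_div_iff₀ hh, one_mul]; exact hht)
  have hmemt : t ∈ Set.Icc (0:ℝ) Tmax := ⟨ht.le, htT⟩
  -- key induction
  have key : ∀ k : ℕ, 1 ≤ k → (k : ℝ) * h ≤ t →
      ‖δ ((k : ℝ) * h) - δ h‖ ≤ ((k : ℝ) - 1) / k * m t := by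
    intro k hk
    induction k, hk using Nat.le_induction with
    | base =>
      intro _
      simp
    | succ k hk ih =>
      intro hkh
      have hkpos : (0:ℝ) < k := by exact_mod_cast hk
      have hkh' : (k : ℝ) * h ≤ t := by
        have : (k : ℝ) * h ≤ ((k+1 : ℕ) : ℝ) * h := by
          push_cast; nlinarith
        linarith
      have hsum : ((k+1 : ℕ) : ℝ) * h = (k : ℝ) * h + h := by push_cast; ring
      have hkhpos : 0 < (k : ℝ) * h := mul_pos hkpos hh
      have hsumt : (k : ℝ) * h + h ≤ t := by rw [← hsum]; exact hkh
      have hle : (k : ℝ) * h + h ≤ Tmax := le_trans hsumt htT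
      have hd := hdecomp ((k : ℝ) * h) h hkhpos hh hle
      set c1 : ℝ := ((k : ℝ) * h) / ((k : ℝ) * h + h) with hc1
      set c2 : ℝ := h / ((k : ℝ) * h + h) with hc2
      have hden : (k : ℝ) * h + h ≠ 0 := by positivity
      have hc2' : c2 = 1 - c1 := by
        rw [hc1, hc2]; field_simp; ring
      have heq : δ (((k+1 : ℕ) : ℝ) * h) - δ h
          = c1 • (δ ((k : ℝ) * h) - δ h) + (1 - c1) • (δ2 h ((k : ℝ) * h) - δ h) := by
        rw [hsum, hd, hc2']
        exact stmt12_aux c1 _ _ _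
      have hc1nn : 0 ≤ c1 := by positivity
      have hc1le : c1 ≤ 1 := by
        rw [hc1, div_le_one (by positivity)]; linarith
      have hest' : ‖δ2 h ((k : ℝ) * h) - δ h‖ ≤ m t := by
        have := hest h ((k : ℝ) * h) hh hkhpos.le (by linarith)
        refine le_trans this (hmono ⟨hkhpos.le, by linarith⟩ hmemt hkh')
      have hnorm : ‖δ (((k+1 : ℕ) : ℝ) * h) - δ h‖
          ≤ c1 * (((k : ℝ) - 1) / k * m t) + (1 - c1) * m t := by
        rw [heq]
        calc ‖c1 • (δ ((k : ℝ) * h) - δ h) + (1 - c1) • (δ2 h ((k : ℝ) * h) - δ h)‖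
            ≤ ‖c1 • (δ ((k : ℝ) * h) - δ h)‖ + ‖(1 - c1) • (δ2 h ((k : ℝ) * h) - δ h)‖ :=
              norm_add_le _ _
          _ ≤ ‖c1‖ * ‖δ ((k : ℝ) * h) - δ h‖ + ‖(1 - c1)‖ * ‖δ2 h ((k : ℝ) * h) - δ h‖ := by
              exact add_le_add (stmt12_nsmul _ _) (stmt12_nsmul _ _)
          _ ≤ c1 * (((k : ℝ) - 1) / k * m t) + (1 - c1) * m t := by
              rw [Real.norm_eq_abs, Real.norm_eq_abs,
                abs_of_nonneg hc1nn, abs_of_nonneg (show (0:ℝ) ≤ 1 - c1 by linarith)]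
              exact add_le_add (mul_le_mul_of_nonneg_left (ih hkh') hc1nn)
                (mul_le_mul_of_nonneg_left hest' (by linarith))
      refine le_trans hnorm (le_of_eq ?_)
      have hc1val : c1 = (k : ℝ) / (k + 1) := by
        rw [hc1]; field_simp
      have hk0 : (k : ℝ) ≠ 0 := hkpos.ne'
      have hk10 : (k : ℝ) + 1 ≠ 0 := by positivity
      rw [hc1val]
      push_cast
      field_simp
      ring
  -- bound at N*h
  have hNhpos : 0 < (N : ℝ) * h := by
    have : (0:ℝ) < N := by exact_mod_cast hN1
    positivity
  have keyN : ‖δ ((N : ℝ) * h) - δ h‖ ≤ m t := by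
    refine le_trans (key N hN1 hNt) ?_
    have h1 : ((N : ℝ) - 1) / N ≤ 1 := by
      rw [div_le_one (by exact_mod_cast hN1)]
      linarith
    nlinarith [hmnn t]
  set r : ℝ := t - (N : ℝ) * h with hr
  have hrnn : 0 ≤ r := by rw [hr]; linarith
  rcases eq_or_lt_of_le hrnn with hr0 | hrpos
  · -- r = 0 : t = N*h
    have htN : t = (N : ℝ) * h := by rw [hr] at hr0; linarith
    rw [← htN] at keyN
    rw [← hr0]
    have : 2 * C₀ * 0 / t = 0 := by ring
    rw [this, add_zero]
    exact keyN
  · -- r > 0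
    have hdN := hdecomp ((N : ℝ) * h) r hNhpos hrpos (by rw [hr]; linarith)
    have hNr : (N : ℝ) * h + r = t := by rw [hr]; ring
    rw [hNr] at hdN
    set c1 : ℝ := ((N : ℝ) * h) / t with hc1
    set c2 : ℝ := r / t with hc2
    have hc2' : c2 = 1 - c1 := by
      rw [hc1, hc2, eq_sub_iff_add_eq, ← add_div, hr]
      field_simp; ring
    have heq : δ t - δ h
        = c1 • (δ ((N : ℝ) * h) - δ h) + (1 - c1) • (δ2 r ((N : ℝ) * h) - δ h) := by
      rw [hdN, hc2']
      exact stmt12_aux c1 _ _ _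
    have hc1nn : 0 ≤ c1 := by positivity
    have hc1le : c1 ≤ 1 := by
      rw [hc1, div_le_one ht]; linarith
    have hbig : ‖δ2 r ((N : ℝ) * h) - δ h‖ ≤ m t + 2 * C₀ := by
      have h1 : ‖δ2 r ((N : ℝ) * h) - δ r‖ ≤ m ((N : ℝ) * h) :=
        hest r ((N : ℝ) * h) hrpos hNhpos.le (by rw [hr]; linarith)
      have h1' : m ((N : ℝ) * h) ≤ m t :=
        hmono ⟨hNhpos.le, by linarith⟩ hmemt hNt
      have hrlt : r < h := by
        rw [hr]
        have : t / h < (N : ℝ) + 1 := by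
          rw [hNdef]; exact_mod_cast Nat.lt_floor_add_one (t / h)
        have := (div_lt_iff₀ hh).mp this
        nlinarith
      have h2 : ‖δ r‖ ≤ C₀ := hbound r hrpos (by linarith)
      have h3 : ‖δ h‖ ≤ C₀ := hbound h hh (by linarith)
      calc ‖δ2 r ((N : ℝ) * h) - δ h‖
          = ‖(δ2 r ((N : ℝ) * h) - δ r) + (δ r - δ h)‖ := by abel_nf
        _ ≤ ‖δ2 r ((N : ℝ) * h) - δ r‖ + ‖δ r - δ h‖ := norm_add_le _ _
        _ ≤ m ((N : ℝ) * h) + (‖δ r‖ + ‖δ h‖) := by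
            gcongr
            exact norm_sub_le _ _
        _ ≤ m t + 2 * C₀ := by linarith
    have hnorm : ‖δ t - δ h‖ ≤ c1 * m t + (1 - c1) * (m t + 2 * C₀) := by
      rw [heq]
      calc ‖c1 • (δ ((N : ℝ) * h) - δ h) + (1 - c1) • (δ2 r ((N : ℝ) * h) - δ h)‖
          ≤ ‖c1 • (δ ((N : ℝ) * h) - δ h)‖ + ‖(1 - c1) • (δ2 r ((N : ℝ) * h) - δ h)‖ :=
            norm_add_le _ _
        _ ≤ ‖c1‖ * ‖δ ((N : ℝ) * h) - δ h‖ + ‖(1 - c1)‖ * ‖δ2 r ((N : ℝ) * h) - δ h‖ := by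
            exact add_le_add (stmt12_nsmul _ _) (stmt12_nsmul _ _)
        _ ≤ c1 * m t + (1 - c1) * (m t + 2 * C₀) := by
            rw [Real.norm_eq_abs, Real.norm_eq_abs,
              abs_of_nonneg hc1nn, abs_of_nonneg (show (0:ℝ) ≤ 1 - c1 by linarith)]
            exact add_le_add (mul_le_mul_of_nonneg_left keyN hc1nn)
              (mul_le_mul_of_nonneg_left hbig (by linarith))
    refine le_trans hnorm (le_of_eq ?_)
    rw [hc1, hr]
    field_simp
    ring
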